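/- Let (χ_k) be the Haar system on [0,1], let δ > 0, and set d_k = 1/(log(k+1))^{1+δ} for k ≥ 1. Then there exists a constant M > 0 such that for every N ≥ 2 and every sequence ε = (ε_n) with ε_n ∈ {-1,0,1}, one has D_N(ε) = (1/N) Σ_{i=1}^{N−1} |∫_0^{i/N} Σ_{k=1}^N d_k k^{1/2} ε_k χ_k(x) dx| ≤ M. -/

import Mathlib

open MeasureTheory Set Filter

noncomputable section

/-- The Haar system on `[0,1]`: `haarFn 1 = 1`, and for `k = 2^s + l` with
`s ≥ 0`, `1 ≤ l ≤ 2^s`, it takes the values `2^{s/2}`, `-2^{s/2}`, `0` on the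
corresponding intervals. -/
def haarFn (k : ℕ) (x : ℝ) : ℝ :=
  if k = 0 then 0
  else if k = 1 then 1
  else
    let s := Nat.log 2 (k - 1)
    let l := k - 2 ^ s
    if (2 * (l:ℝ) - 2) / 2 ^ (s + 1) < x ∧ x < (2 * (l:ℝ) - 1) / 2 ^ (s + 1) then
      Real.sqrt (2 ^ s)
    else if (2 * (l:ℝ) - 1) / 2 ^ (s + 1) < x ∧ x < (2 * (l:ℝ)) / 2 ^ (s + 1) then
      -Real.sqrt (2 ^ s)
    else 0

def sVal (k : ℕ) : ℕ := Nat.log 2 (k - 1)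
def lVal (k : ℕ) : ℕ := k - 2 ^ sVal k
def aVal (k : ℕ) : ℝ := (2 * (lVal k : ℝ) - 2) / 2 ^ (sVal k + 1)
def bVal (k : ℕ) : ℝ := (2 * (lVal k : ℝ) - 1) / 2 ^ (sVal k + 1)
def cVal (k : ℕ) : ℝ := (2 * (lVal k : ℝ)) / 2 ^ (sVal k + 1)

lemma sVal_bounds {k : ℕ} (hk : 2 ≤ k) :
    2 ^ sVal k ≤ k - 1 ∧ k - 1 < 2 ^ (sVal k + 1) :=
  ⟨Nat.pow_log_le_self 2 (by omega), Nat.lt_pow_succ_log_self (by norm_num) _⟩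

lemma lVal_bounds {k : ℕ} (hk : 2 ≤ k) : 1 ≤ lVal k ∧ lVal k ≤ 2 ^ sVal k := by
  have h := sVal_bounds hk
  unfold lVal
  omega

lemma abc {k : ℕ} (hk : 2 ≤ k) :
    0 ≤ aVal k ∧ aVal k < bVal k ∧ bVal k < cVal k ∧
      bVal k - aVal k = 1 / 2 ^ (sVal k + 1) ∧ cVal k - bVal k = 1 / 2 ^ (sVal k + 1) := by
  have hl : (1:ℝ) ≤ (lVal k : ℝ) := by exact_mod_cast (lVal_bounds hk).1
  have hP : (0:ℝ) < 2 ^ (sVal k + 1) := by positivity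
  unfold aVal bVal cVal
  refine ⟨div_nonneg (by linarith) hP.le, ?_, ?_, ?_, ?_⟩
  · exact div_lt_div_of_pos_right (by linarith) hP
  · exact div_lt_div_of_pos_right (by linarith) hP
  · rw [div_sub_div_same]; ring_nf
  · rw [div_sub_div_same]; ring_nf

lemma haar_eq {k : ℕ} (hk : 2 ≤ k) (x : ℝ) :
    haarFn k x = Real.sqrt (2 ^ sVal k) *
      ((Ioo (aVal k) (bVal k)).indicator (fun _ => (1:ℝ)) x
        - (Ioo (bVal k) (cVal k)).indicator (fun _ => (1:ℝ)) x) := by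
  have h0 : k ≠ 0 := by omega
  have h1 : k ≠ 1 := by omega
  have hab : aVal k < bVal k := (abc hk).2.1
  have hbc : bVal k < cVal k := (abc hk).2.2.1
  simp only [haarFn, if_neg h0, if_neg h1]
  show (if aVal k < x ∧ x < bVal k then Real.sqrt (2 ^ sVal k)
    else if bVal k < x ∧ x < cVal k then -Real.sqrt (2 ^ sVal k) else 0) = _
  simp only [Set.indicator_apply, Set.mem_Ioo]
  split_ifs with hA hB hB
  · exact absurd hB.1 (not_lt.2 (le_of_lt hA.2))
  · ring
  · ring
  · ring

lemma int_ind (a b t : ℝ) (ht : 0 ≤ t) :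
    ∫ x in (0:ℝ)..t, (Ioo a b).indicator (fun _ => (1:ℝ)) x
      = (volume (Ioo a b ∩ Ioc 0 t)).toReal := by
  rw [intervalIntegral.integral_of_le ht,
    MeasureTheory.setIntegral_indicator measurableSet_Ioo]
  simp [Set.inter_comm]; rfl

lemma ind_integrable (a b : ℝ) :
    Integrable ((Ioo a b).indicator (fun _ => (1:ℝ))) volume := by
  rw [integrable_indicator_iff measurableSet_Ioo]
  refine integrableOn_const ?_
  rw [Real.volume_Ioo]; exact ENNReal.ofReal_ne_top

lemma haar_intervalIntegrable (k : ℕ) (u v : ℝ) :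
    IntervalIntegrable (haarFn k) volume u v := by
  rcases Nat.lt_or_ge k 2 with h | h
  · interval_cases k
    · have : haarFn 0 = fun _ => (0:ℝ) := by funext x; simp [haarFn]
      rw [this]; exact intervalIntegrable_const
    · have : haarFn 1 = fun _ => (1:ℝ) := by funext x; simp [haarFn]
      rw [this]; exact intervalIntegrable_const
  · rw [show haarFn k = _ from funext (haar_eq h)]
    exact (((ind_integrable _ _).sub (ind_integrable _ _)).const_mul _).intervalIntegrable

lemma haar_integral {k : ℕ} (hk : 2 ≤ k) {t : ℝ} (ht : 0 ≤ t) :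
    ∫ x in (0:ℝ)..t, haarFn k x = Real.sqrt (2 ^ sVal k) *
      ((volume (Ioo (aVal k) (bVal k) ∩ Ioc 0 t)).toReal
        - (volume (Ioo (bVal k) (cVal k) ∩ Ioc 0 t)).toReal) := by
  rw [show haarFn k = _ from funext (haar_eq hk)]
  rw [intervalIntegral.integral_const_mul,
    intervalIntegral.integral_sub ((ind_integrable _ _).intervalIntegrable)
      ((ind_integrable _ _).intervalIntegrable),
    int_ind _ _ _ ht, int_ind _ _ _ ht]

lemma vol_le {a b t : ℝ} (hab : a ≤ b) :
    (volume (Ioo a b ∩ Ioc 0 t)).toReal ≤ b - a := by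
  have h1 : volume (Ioo a b ∩ Ioc 0 t) ≤ volume (Ioo a b) :=
    measure_mono inter_subset_left
  have h2 : (volume (Ioo a b)).toReal = b - a := by
    rw [Real.volume_Ioo, ENNReal.toReal_ofReal (by linarith)]
  calc (volume (Ioo a b ∩ Ioc 0 t)).toReal
      ≤ (volume (Ioo a b)).toReal :=
        ENNReal.toReal_mono (by rw [Real.volume_Ioo]; exact ENNReal.ofReal_ne_top) h1
    _ = b - a := h2

lemma haar_integral_abs_le {k : ℕ} (hk : 2 ≤ k) {t : ℝ} (ht : 0 ≤ t) :
    |∫ x in (0:ℝ)..t, haarFn k x| ≤ Real.sqrt (2 ^ sVal k) / 2 ^ (sVal k + 1) := by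
  obtain ⟨ha0, hab, hbc, hba, hcb⟩ := abc hk
  rw [haar_integral hk ht, abs_mul, abs_of_nonneg (Real.sqrt_nonneg _)]
  have h1 := vol_le (t := t) hab.le
  have h2 := vol_le (t := t) hbc.le
  have h3 : |(volume (Ioo (aVal k) (bVal k) ∩ Ioc 0 t)).toReal
      - (volume (Ioo (bVal k) (cVal k) ∩ Ioc 0 t)).toReal| ≤ 1 / 2 ^ (sVal k + 1) := by
    rw [abs_sub_le_iff]
    constructor <;> [skip; skip] <;>
      · have := ENNReal.toReal_nonneg (a := volume (Ioo (aVal k) (bVal k) ∩ Ioc 0 t))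
        have := ENNReal.toReal_nonneg (a := volume (Ioo (bVal k) (cVal k) ∩ Ioc 0 t))
        linarith
  calc Real.sqrt (2 ^ sVal k) * |_| ≤ Real.sqrt (2 ^ sVal k) * (1 / 2 ^ (sVal k + 1)) :=
        mul_le_mul_of_nonneg_left h3 (Real.sqrt_nonneg _)
    _ = Real.sqrt (2 ^ sVal k) / 2 ^ (sVal k + 1) := by ring

lemma haar_integral_zero {k : ℕ} (hk : 2 ≤ k) {t : ℝ} (ht : 0 ≤ t)
    (h : t ≤ aVal k ∨ cVal k ≤ t) :
    ∫ x in (0:ℝ)..t, haarFn k x = 0 := by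
  obtain ⟨ha0, hab, hbc, hba, hcb⟩ := abc hk
  rw [haar_integral hk ht]
  rcases h with h | h
  · have e1 : Ioo (aVal k) (bVal k) ∩ Ioc 0 t = ∅ := by
      rw [Set.eq_empty_iff_forall_notMem]
      rintro x ⟨⟨h1, h2⟩, h3, h4⟩; linarith
    have e2 : Ioo (bVal k) (cVal k) ∩ Ioc 0 t = ∅ := by
      rw [Set.eq_empty_iff_forall_notMem]
      rintro x ⟨⟨h1, h2⟩, h3, h4⟩; linarith
    rw [e1, e2]; ring
  · have e1 : Ioo (aVal k) (bVal k) ∩ Ioc 0 t = Ioo (aVal k) (bVal k) :=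
      Set.inter_eq_left.2 (fun x hx => ⟨by rcases hx with ⟨h1, h2⟩; linarith,
        by rcases hx with ⟨h1, h2⟩; linarith⟩)
    have e2 : Ioo (bVal k) (cVal k) ∩ Ioc 0 t = Ioo (bVal k) (cVal k) :=
      Set.inter_eq_left.2 (fun x hx => ⟨by rcases hx with ⟨h1, h2⟩; linarith,
        by rcases hx with ⟨h1, h2⟩; linarith⟩)
    rw [e1, e2, Real.volume_Ioo, Real.volume_Ioo,
      ENNReal.toReal_ofReal (by linarith), ENNReal.toReal_ofReal (by linarith)]
    rw [hba, hcb]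
    ring

lemma sVal_eq {k s : ℕ} (h1 : 2 ^ s < k) (h2 : k ≤ 2 ^ (s + 1)) : sVal k = s := by
  have h3 : 0 < 2 ^ s := Nat.pow_pos (by norm_num)
  exact Nat.log_eq_of_pow_le_of_lt_pow (by omega) (by omega)

lemma uniq {k k' s : ℕ} (hk : k ∈ Finset.Ioc (2 ^ s) (2 ^ (s + 1)))
    (hk' : k' ∈ Finset.Ioc (2 ^ s) (2 ^ (s + 1))) {t : ℝ}
    (h : aVal k < t ∧ t < cVal k) (h' : aVal k' < t ∧ t < cVal k') : k = k' := by
  rw [Finset.mem_Ioc] at hk hk'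
  have hs : sVal k = s := sVal_eq hk.1 hk.2
  have hs' : sVal k' = s := sVal_eq hk'.1 hk'.2
  have hP : (0:ℝ) < 2 ^ (s + 1) := by positivity
  have e1 : (2 * (lVal k : ℝ) - 2) / 2 ^ (s + 1) < (2 * (lVal k' : ℝ)) / 2 ^ (s + 1) := by
    have := h.1; have := h'.2
    unfold aVal cVal at *; rw [hs] at *; rw [hs'] at *; linarith
  have e2 : (2 * (lVal k' : ℝ) - 2) / 2 ^ (s + 1) < (2 * (lVal k : ℝ)) / 2 ^ (s + 1) := by
    have := h'.1; have := h.2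
    unfold aVal cVal at *; rw [hs] at *; rw [hs'] at *; linarith
  have f1 : 2 * (lVal k : ℝ) - 2 < 2 * (lVal k' : ℝ) := by
    have := (div_lt_div_iff_of_pos_right hP).1 e1; linarith
  have f2 : 2 * (lVal k' : ℝ) - 2 < 2 * (lVal k : ℝ) := by
    have := (div_lt_div_iff_of_pos_right hP).1 e2; linarith
  have g1 : (lVal k : ℝ) < (lVal k' : ℝ) + 1 := by linarith
  have g2 : (lVal k' : ℝ) < (lVal k : ℝ) + 1 := by linarith
  have n1 : lVal k < lVal k' + 1 := by exact_mod_cast g1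
  have n2 : lVal k' < lVal k + 1 := by exact_mod_cast g2
  have : lVal k = lVal k' := by omega
  unfold lVal at this
  rw [hs, hs'] at this
  omega

lemma sum_le_of_unique {S : Finset ℕ} {f : ℕ → ℝ} {C : ℝ} (hC : 0 ≤ C)
    (hle : ∀ k ∈ S, f k ≤ C) (h0 : ∀ k ∈ S, 0 ≤ f k)
    (huniq : ∀ k ∈ S, ∀ k' ∈ S, f k ≠ 0 → f k' ≠ 0 → k = k') :
    ∑ k ∈ S, f k ≤ C := by
  classical
  rw [← Finset.sum_filter_ne_zero]
  have hcard : (S.filter (fun k => f k ≠ 0)).card ≤ 1 := by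
    refine Finset.card_le_one.2 (fun a ha b hb => ?_)
    rw [Finset.mem_filter] at ha hb
    exact huniq a ha.1 b hb.1 ha.2 hb.2
  calc ∑ k ∈ S.filter (fun k => f k ≠ 0), f k
      ≤ (S.filter (fun k => f k ≠ 0)).card • C :=
        Finset.sum_le_card_nsmul _ _ _ (fun x hx => hle x (Finset.mem_filter.1 hx).1)
    _ ≤ C := by
        rw [nsmul_eq_mul]
        calc ((S.filter (fun k => f k ≠ 0)).card : ℝ) * C ≤ 1 * C := by
              apply mul_le_mul_of_nonneg_right _ hC
              exact_mod_cast hcard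
          _ = C := one_mul C

lemma block_bound (δ : ℝ) (hδ : 0 < δ) (ε : ℕ → ℝ) (hε : ∀ n, |ε n| ≤ 1)
    (s : ℕ) {t : ℝ} (ht : 0 ≤ t) :
    ∑ k ∈ Finset.Ioc ((2:ℕ) ^ s) (2 ^ (s + 1)),
      |(1 / Real.log ((k:ℝ) + 1) ^ ((1:ℝ) + δ)) * Real.sqrt k * ε k *
        ∫ x in (0:ℝ)..t, haarFn k x|
      ≤ (2 / Real.log 2) ^ ((1:ℝ) + δ) * (1 / ((s:ℝ) + 1) ^ ((1:ℝ) + δ)) := by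
  have hlog2 : 0 < Real.log 2 := Real.log_pos one_lt_two
  have hexp : 0 ≤ (1:ℝ) + δ := by linarith
  have hC : 0 ≤ (2 / Real.log 2) ^ ((1:ℝ) + δ) * (1 / ((s:ℝ) + 1) ^ ((1:ℝ) + δ)) := by
    apply mul_nonneg (Real.rpow_nonneg (by positivity) _)
    exact le_of_lt (by positivity)
  -- facts for k in the block
  have hfacts : ∀ k ∈ Finset.Ioc (2 ^ s) (2 ^ (s + 1)), 2 ≤ k ∧ sVal k = s := by
    intro k hk
    rw [Finset.mem_Ioc] at hk
    have h1 : 1 ≤ 2 ^ s := Nat.one_le_two_pow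
    exact ⟨by omega, sVal_eq hk.1 hk.2⟩
  apply sum_le_of_unique hC
  · intro k hk
    obtain ⟨hk2, hs⟩ := hfacts k hk
    rw [Finset.mem_Ioc] at hk
    have hL : 0 < Real.log ((k:ℝ) + 1) := by
      apply Real.log_pos
      have : (2:ℝ) ≤ (k:ℝ) := by exact_mod_cast hk2
      linarith
    have hd0 : 0 ≤ 1 / Real.log ((k:ℝ) + 1) ^ ((1:ℝ) + δ) := by
      apply le_of_lt; apply div_pos one_pos; exact Real.rpow_pos_of_pos hL _
    have hI := haar_integral_abs_le hk2 ht
    rw [hs] at hI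
    have hkle : (k:ℝ) ≤ 2 ^ (s + 1) := by exact_mod_cast hk.2
    have hsq : Real.sqrt k * Real.sqrt (2 ^ s) / 2 ^ (s + 1) ≤ 1 := by
      rw [← Real.sqrt_mul (by positivity), div_le_one (by positivity)]
      have hb : (k:ℝ) * 2 ^ s ≤ ((2:ℝ) ^ (s + 1)) ^ 2 := by
        have h2 : (0:ℝ) < 2 ^ s := by positivity
        have h3 : (2:ℝ) ^ (s + 1) = 2 * 2 ^ s := by ring
        nlinarith
      calc Real.sqrt ((k:ℝ) * 2 ^ s) ≤ Real.sqrt (((2:ℝ) ^ (s + 1)) ^ 2) :=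
            Real.sqrt_le_sqrt hb
        _ = 2 ^ (s + 1) := Real.sqrt_sq (by positivity)
    have hdC : 1 / Real.log ((k:ℝ) + 1) ^ ((1:ℝ) + δ)
        ≤ (2 / Real.log 2) ^ ((1:ℝ) + δ) * (1 / ((s:ℝ) + 1) ^ ((1:ℝ) + δ)) := by
      have hnat : (2:ℝ) ^ (s + 1) ≤ ((k:ℝ) + 1) ^ 2 := by
        have h2s : (2:ℝ) ^ s + 1 ≤ (k:ℝ) := by
          have : 2 ^ s + 1 ≤ k := hk.1
          exact_mod_cast this
        have h2 : (0:ℝ) < 2 ^ s := by positivity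
        have h3 : (2:ℝ) ^ (s + 1) = 2 * 2 ^ s := by ring
        nlinarith
      have hlog : ((s:ℝ) + 1) * Real.log 2 ≤ 2 * Real.log ((k:ℝ) + 1) := by
        have := Real.log_le_log (by positivity) hnat
        rw [Real.log_pow, Real.log_pow] at this
        push_cast at this
        linarith
      have hA : (0:ℝ) < ((s:ℝ) + 1) * Real.log 2 / 2 := by positivity
      have hinv : 1 / Real.log ((k:ℝ) + 1)
          ≤ (2 / Real.log 2) * (1 / ((s:ℝ) + 1)) := by
        have h1 : 1 / Real.log ((k:ℝ) + 1) ≤ 1 / (((s:ℝ) + 1) * Real.log 2 / 2) :=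
          one_div_le_one_div_of_le hA (by linarith)
        have h2 : 1 / (((s:ℝ) + 1) * Real.log 2 / 2)
            = (2 / Real.log 2) * (1 / ((s:ℝ) + 1)) := by
          field_simp
        linarith
      calc 1 / Real.log ((k:ℝ) + 1) ^ ((1:ℝ) + δ)
          = (1 / Real.log ((k:ℝ) + 1)) ^ ((1:ℝ) + δ) := by
            rw [Real.div_rpow (by norm_num) hL.le, Real.one_rpow]
        _ ≤ ((2 / Real.log 2) * (1 / ((s:ℝ) + 1))) ^ ((1:ℝ) + δ) :=
            Real.rpow_le_rpow (by positivity) hinv hexp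
        _ = (2 / Real.log 2) ^ ((1:ℝ) + δ) * (1 / ((s:ℝ) + 1)) ^ ((1:ℝ) + δ) :=
            Real.mul_rpow (by positivity) (by positivity)
        _ = (2 / Real.log 2) ^ ((1:ℝ) + δ) * (1 / ((s:ℝ) + 1) ^ ((1:ℝ) + δ)) := by
            congr 1
            rw [one_div, one_div, Real.inv_rpow (by positivity)]
    calc |(1 / Real.log ((k:ℝ) + 1) ^ ((1:ℝ) + δ)) * Real.sqrt k * ε k *
          ∫ x in (0:ℝ)..t, haarFn k x|
        = (1 / Real.log ((k:ℝ) + 1) ^ ((1:ℝ) + δ)) * Real.sqrt k * |ε k| *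
            |∫ x in (0:ℝ)..t, haarFn k x| := by
          rw [abs_mul, abs_mul, abs_mul, abs_of_nonneg hd0,
            abs_of_nonneg (Real.sqrt_nonneg _)]
      _ ≤ (1 / Real.log ((k:ℝ) + 1) ^ ((1:ℝ) + δ)) * Real.sqrt k * 1 *
            (Real.sqrt (2 ^ s) / 2 ^ (s + 1)) := by
          refine mul_le_mul ?_ hI (abs_nonneg _) ?_
          · exact mul_le_mul_of_nonneg_left (hε k)
              (mul_nonneg hd0 (Real.sqrt_nonneg _))
          · exact mul_nonneg (mul_nonneg hd0 (Real.sqrt_nonneg _)) zero_le_one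
      _ = (1 / Real.log ((k:ℝ) + 1) ^ ((1:ℝ) + δ)) *
            (Real.sqrt k * Real.sqrt (2 ^ s) / 2 ^ (s + 1)) := by ring
      _ ≤ (1 / Real.log ((k:ℝ) + 1) ^ ((1:ℝ) + δ)) * 1 :=
          mul_le_mul_of_nonneg_left hsq hd0
      _ = 1 / Real.log ((k:ℝ) + 1) ^ ((1:ℝ) + δ) := mul_one _
      _ ≤ _ := hdC
  · intro k _; exact abs_nonneg _
  · intro k hk k' hk' hfk hfk'
    obtain ⟨hk2, _⟩ := hfacts k hk
    obtain ⟨hk2', _⟩ := hfacts k' hk'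
    have hak : ∀ m : ℕ, 2 ≤ m →
        |(1 / Real.log ((m:ℝ) + 1) ^ ((1:ℝ) + δ)) * Real.sqrt m * ε m *
          ∫ x in (0:ℝ)..t, haarFn m x| ≠ 0 → aVal m < t ∧ t < cVal m := by
      intro m hm2 hne
      by_contra hcon
      apply hne
      have hz : ∫ x in (0:ℝ)..t, haarFn m x = 0 := by
        apply haar_integral_zero hm2 ht
        rcases le_or_gt t (aVal m) with h | h
        · exact Or.inl h
        · right
          push_neg at hcon
          exact hcon h
      rw [hz, mul_zero, abs_zero]
    exact uniq hk hk' (hak k hk2 hfk) (hak k' hk2' hfk')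

/-- `Q_N(x, ε) = ∑_{k=1}^N d_k k^{1/2} ε_k φ_k(x)`. -/
def QN (φ : ℕ → ℝ → ℝ) (d ε : ℕ → ℝ) (N : ℕ) (x : ℝ) : ℝ :=
  ∑ k ∈ Finset.Icc 1 N, d k * Real.sqrt k * ε k * φ k x

/-- `D_N(ε) = (1/N) ∑_{i=1}^{N-1} |∫_0^{i/N} Q_N(x, ε) dx|`. -/
def DN (φ : ℕ → ℝ → ℝ) (d ε : ℕ → ℝ) (N : ℕ) : ℝ :=
  (1 / (N:ℝ)) * ∑ i ∈ Finset.Icc 1 (N - 1), |∫ x in (0:ℝ)..((i:ℝ)/(N:ℝ)), QN φ d ε N x|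

lemma hsummable (δ : ℝ) (hδ : 0 < δ) :
    Summable (fun n : ℕ => 1 / ((n:ℝ) + 1) ^ ((1:ℝ) + δ)) := by
  have h := Real.summable_one_div_nat_rpow.2 (show (1:ℝ) < 1 + δ by linarith)
  have h2 := (summable_nat_add_iff 1).2 h
  refine h2.congr (fun n => ?_)
  push_cast
  ring_nf

lemma key (δ : ℝ) (hδ : 0 < δ) (N : ℕ) (hN : 1 ≤ N) (ε : ℕ → ℝ) (hε : ∀ n, |ε n| ≤ 1)
    {t : ℝ} (ht : 0 ≤ t) (ht1 : t ≤ 1) :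
    |∫ x in (0:ℝ)..t, QN haarFn (fun k => 1 / Real.log ((k:ℝ) + 1) ^ ((1:ℝ) + δ)) ε N x|
      ≤ 1 / Real.log 2 ^ ((1:ℝ) + δ)
        + (2 / Real.log 2) ^ ((1:ℝ) + δ) * ∑' n : ℕ, 1 / ((n:ℝ) + 1) ^ ((1:ℝ) + δ) := by
  have hlog2 : 0 < Real.log 2 := Real.log_pos one_lt_two
  have hd1 : (0:ℝ) < 1 / Real.log 2 ^ ((1:ℝ) + δ) :=
    div_pos one_pos (Real.rpow_pos_of_pos hlog2 _)
  have hK : (0:ℝ) ≤ (2 / Real.log 2) ^ ((1:ℝ) + δ) := Real.rpow_nonneg (by positivity) _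
  have hswap : (∫ x in (0:ℝ)..t,
      QN haarFn (fun k => 1 / Real.log ((k:ℝ) + 1) ^ ((1:ℝ) + δ)) ε N x)
      = ∑ k ∈ Finset.Icc 1 N, ((1 / Real.log ((k:ℝ) + 1) ^ ((1:ℝ) + δ)) *
          Real.sqrt k * ε k * ∫ x in (0:ℝ)..t, haarFn k x) := by
    unfold QN
    rw [intervalIntegral.integral_finset_sum]
    · exact Finset.sum_congr rfl fun k _ => intervalIntegral.integral_const_mul _ _
    · intro k _
      exact (haar_intervalIntegrable k 0 t).const_mul _
  rw [hswap]
  have hsplit : Finset.Icc 1 N = insert 1 (Finset.Icc 2 N) := by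
    ext m
    simp only [Finset.mem_Icc, Finset.mem_insert]
    omega
  have habs : |t| ≤ 1 := abs_le.2 ⟨by linarith, ht1⟩
  have hterm1 : |(1 / Real.log (((1:ℕ):ℝ) + 1) ^ ((1:ℝ) + δ)) *
      Real.sqrt ((1:ℕ):ℝ) * ε 1 * ∫ x in (0:ℝ)..t, haarFn 1 x|
      ≤ 1 / Real.log 2 ^ ((1:ℝ) + δ) := by
    have hint : (∫ x in (0:ℝ)..t, haarFn 1 x) = t := by
      rw [show haarFn 1 = fun _ => (1:ℝ) from funext (fun x => by simp [haarFn])]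
      simp
    rw [hint]
    have e1 : Real.sqrt ((1:ℕ):ℝ) = 1 := by norm_num
    have e2 : ((1:ℕ):ℝ) + 1 = 2 := by norm_num
    rw [e1, e2, mul_one, abs_mul, abs_mul, abs_of_nonneg hd1.le]
    calc (1 / Real.log 2 ^ ((1:ℝ) + δ)) * |ε 1| * |t|
        ≤ (1 / Real.log 2 ^ ((1:ℝ) + δ)) * 1 * 1 := by
          refine mul_le_mul (mul_le_mul_of_nonneg_left (hε 1) hd1.le) habs
            (abs_nonneg _) ?_
          exact mul_nonneg hd1.le zero_le_one
      _ = 1 / Real.log 2 ^ ((1:ℝ) + δ) := by ring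
  have hrest : ∑ k ∈ Finset.Icc 2 N,
      |(1 / Real.log ((k:ℝ) + 1) ^ ((1:ℝ) + δ)) * Real.sqrt k * ε k *
        ∫ x in (0:ℝ)..t, haarFn k x|
      ≤ (2 / Real.log 2) ^ ((1:ℝ) + δ) * ∑' n : ℕ, 1 / ((n:ℝ) + 1) ^ ((1:ℝ) + δ) := by
    have hsub : Finset.Icc 2 N ⊆
        (Finset.range N).biUnion (fun s => Finset.Ioc ((2:ℕ) ^ s) (2 ^ (s + 1))) := by
      intro k hk
      rw [Finset.mem_Icc] at hk
      have hb := sVal_bounds hk.1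
      have hlog := Nat.log_le_self 2 (k - 1)
      refine Finset.mem_biUnion.2 ⟨sVal k, Finset.mem_range.2 ?_, Finset.mem_Ioc.2 ?_⟩
      · have hsk : sVal k ≤ k - 1 := hlog
        omega
      · exact ⟨by omega, Nat.le_of_pred_lt hb.2⟩
    have hdisj : Set.PairwiseDisjoint ↑(Finset.range N)
        (fun s => Finset.Ioc ((2:ℕ) ^ s) (2 ^ (s + 1))) := by
      intro a _ b _ hab
      apply Finset.disjoint_left.2
      intro x hx hx'
      rw [Finset.mem_Ioc] at hx hx'
      rcases Nat.lt_or_ge a b with h | h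
      · have : 2 ^ (a + 1) ≤ 2 ^ b := Nat.pow_le_pow_right (by norm_num) (by omega)
        omega
      · have hba : b < a := by omega
        have : 2 ^ (b + 1) ≤ 2 ^ a := Nat.pow_le_pow_right (by norm_num) (by omega)
        omega
    calc ∑ k ∈ Finset.Icc 2 N,
        |(1 / Real.log ((k:ℝ) + 1) ^ ((1:ℝ) + δ)) * Real.sqrt k * ε k *
          ∫ x in (0:ℝ)..t, haarFn k x|
        ≤ ∑ k ∈ (Finset.range N).biUnion (fun s => Finset.Ioc ((2:ℕ) ^ s) (2 ^ (s + 1))),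
            |(1 / Real.log ((k:ℝ) + 1) ^ ((1:ℝ) + δ)) * Real.sqrt k * ε k *
              ∫ x in (0:ℝ)..t, haarFn k x| :=
          Finset.sum_le_sum_of_subset_of_nonneg hsub (fun _ _ _ => abs_nonneg _)
      _ = ∑ s ∈ Finset.range N, ∑ k ∈ Finset.Ioc ((2:ℕ) ^ s) (2 ^ (s + 1)),
            |(1 / Real.log ((k:ℝ) + 1) ^ ((1:ℝ) + δ)) * Real.sqrt k * ε k *
              ∫ x in (0:ℝ)..t, haarFn k x| := Finset.sum_biUnion hdisj
      _ ≤ ∑ s ∈ Finset.range N,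
            (2 / Real.log 2) ^ ((1:ℝ) + δ) * (1 / ((s:ℝ) + 1) ^ ((1:ℝ) + δ)) :=
          Finset.sum_le_sum (fun s _ => block_bound δ hδ ε hε s ht)
      _ = (2 / Real.log 2) ^ ((1:ℝ) + δ) *
            ∑ s ∈ Finset.range N, 1 / ((s:ℝ) + 1) ^ ((1:ℝ) + δ) := by
          rw [Finset.mul_sum]
      _ ≤ (2 / Real.log 2) ^ ((1:ℝ) + δ) * ∑' n : ℕ, 1 / ((n:ℝ) + 1) ^ ((1:ℝ) + δ) := by
          apply mul_le_mul_of_nonneg_left _ hK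
          exact Summable.sum_le_tsum (Finset.range N)
            (fun i _ => by positivity) (hsummable δ hδ)
  calc |∑ k ∈ Finset.Icc 1 N, ((1 / Real.log ((k:ℝ) + 1) ^ ((1:ℝ) + δ)) *
        Real.sqrt k * ε k * ∫ x in (0:ℝ)..t, haarFn k x)|
      ≤ ∑ k ∈ Finset.Icc 1 N, |(1 / Real.log ((k:ℝ) + 1) ^ ((1:ℝ) + δ)) *
          Real.sqrt k * ε k * ∫ x in (0:ℝ)..t, haarFn k x| :=
        Finset.abs_sum_le_sum_abs _ _
    _ = |(1 / Real.log (((1:ℕ):ℝ) + 1) ^ ((1:ℝ) + δ)) *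
          Real.sqrt ((1:ℕ):ℝ) * ε 1 * ∫ x in (0:ℝ)..t, haarFn 1 x|
        + ∑ k ∈ Finset.Icc 2 N, |(1 / Real.log ((k:ℝ) + 1) ^ ((1:ℝ) + δ)) *
            Real.sqrt k * ε k * ∫ x in (0:ℝ)..t, haarFn k x| := by
        rw [hsplit, Finset.sum_insert (by simp)]
    _ ≤ _ := add_le_add hterm1 hrest

theorem statement2 (δ : ℝ) (hδ : 0 < δ) :
    ∃ M > (0:ℝ), ∀ N : ℕ, 2 ≤ N → ∀ ε : ℕ → ℝ,
      (∀ n, ε n = -1 ∨ ε n = 0 ∨ ε n = 1) →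
      DN haarFn (fun k => 1 / Real.log ((k:ℝ) + 1) ^ ((1:ℝ) + δ)) ε N ≤ M := by
  have hlog2 : 0 < Real.log 2 := Real.log_pos one_lt_two
  set T : ℝ := ∑' n : ℕ, 1 / ((n:ℝ) + 1) ^ ((1:ℝ) + δ) with hT
  set M0 : ℝ := 1 / Real.log 2 ^ ((1:ℝ) + δ) + (2 / Real.log 2) ^ ((1:ℝ) + δ) * T
    with hM0
  have hTnn : 0 ≤ T := tsum_nonneg (fun i => by positivity)
  have hM0nn : 0 ≤ M0 := by
    have h1 : (0:ℝ) < 1 / Real.log 2 ^ ((1:ℝ) + δ) :=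
      div_pos one_pos (Real.rpow_pos_of_pos hlog2 _)
    have h2 : (0:ℝ) ≤ (2 / Real.log 2) ^ ((1:ℝ) + δ) := Real.rpow_nonneg (by positivity) _
    have := mul_nonneg h2 hTnn
    rw [hM0]; linarith
  refine ⟨M0 + 1, by linarith, ?_⟩
  intro N hN ε hε0
  have hε : ∀ n, |ε n| ≤ 1 := by
    intro n
    rcases hε0 n with h | h | h <;> rw [h] <;> norm_num
  have hNpos : (0:ℝ) < N := by exact_mod_cast (by omega : 0 < N)
  unfold DN
  have hbound : ∀ i ∈ Finset.Icc 1 (N - 1),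
      |∫ x in (0:ℝ)..((i:ℝ)/(N:ℝ)), QN haarFn
        (fun k => 1 / Real.log ((k:ℝ) + 1) ^ ((1:ℝ) + δ)) ε N x| ≤ M0 := by
    intro i hi
    rw [Finset.mem_Icc] at hi
    have hiN : (i:ℝ) ≤ (N:ℝ) := by exact_mod_cast (by omega : i ≤ N)
    exact key δ hδ N (by omega) ε hε (div_nonneg (Nat.cast_nonneg i) hNpos.le)
      ((div_le_one hNpos).2 hiN)
  calc (1 / (N:ℝ)) * ∑ i ∈ Finset.Icc 1 (N - 1),
        |∫ x in (0:ℝ)..((i:ℝ)/(N:ℝ)), QN haarFn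
          (fun k => 1 / Real.log ((k:ℝ) + 1) ^ ((1:ℝ) + δ)) ε N x|
      ≤ (1 / (N:ℝ)) * (((Finset.Icc 1 (N - 1)).card : ℝ) * M0) := by
        apply mul_le_mul_of_nonneg_left _ (by positivity)
        have := Finset.sum_le_card_nsmul _ _ _ hbound
        rwa [nsmul_eq_mul] at this
    _ ≤ M0 := by
        have hcard : ((Finset.Icc 1 (N - 1)).card : ℝ) ≤ (N:ℝ) := by
          rw [Nat.card_Icc]
          exact_mod_cast (by omega : N - 1 + 1 - 1 ≤ N)
        rw [one_div, inv_mul_le_iff₀ hNpos]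
        exact mul_le_mul_of_nonneg_right hcard hM0nn
    _ ≤ M0 + 1 := by linarith
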